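/- During the run of proposer-proposing deferred acceptance, if a proposer p is rejected by an acceptor a at some step, then a is impossible for p, i.e., no stable matching pairs p with a. (Proved by induction on the rejection steps.) -/

import Mathlib

/-- State of the many-to-one deferred acceptance procedure. -/
structure DAState (np na : ℕ) where
  pending : Fin np → List (Fin na)
  matched : Fin na → Finset (Fin np)

/-- A proposer is free if no acceptor currently holds it. -/
def isFreeP {np na : ℕ} (s : DAState np na) (p : Fin np) : Bool :=
  (List.finRange na).all fun a => decide (p ∉ s.matched a)

/-- The next proposer to propose: a free proposer with a nonempty remaining list. -/
def nextProposer {np na : ℕ} (s : DAState np na) : Option (Fin np) :=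
  (List.finRange np).find? fun p => !(s.pending p).isEmpty && isFreeP s p

/-- One step of many-to-one deferred acceptance with quotas `q`. -/
noncomputable def daStep {np na : ℕ} (q : Fin na → ℕ) (prefA : Fin na → Fin np → ℕ)
    (s : DAState np na) : DAState np na :=
  match nextProposer s with
  | none => s
  | some p =>
    match s.pending p with
    | [] => s
    | a :: rest =>
      let pending' := Function.update s.pending p rest
      let S := insert p (s.matched a)
      if S.card ≤ q a then
        ⟨pending', Function.update s.matched a S⟩
      else
        match S.toList.argmax (prefA a) with
        | none => ⟨pending', s.matched⟩
        | some worst => ⟨pending', Function.update s.matched a (S.erase worst)⟩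

/-- The state of the deferred acceptance run after `t` steps. -/
noncomputable def daIter {np na : ℕ} (prefP : Fin np → List (Fin na))
    (q : Fin na → ℕ) (prefA : Fin na → Fin np → ℕ) (t : ℕ) : DAState np na :=
  (daStep q prefA)^[t] ⟨prefP, fun _ => ∅⟩

/-- `p` proposes to `a` in state `s`. -/
def proposesTo {np na : ℕ} (s : DAState np na) (p : Fin np) (a : Fin na) : Prop :=
  nextProposer s = some p ∧ (s.pending p).head? = some a

/-- `p` is rejected by `a` at step `t` of the run: either its proposal to `a` is not
held at the next state, or it was held by `a` and is discarded at this step. -/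
noncomputable def RejectedAt {np na : ℕ} (prefP : Fin np → List (Fin na))
    (q : Fin na → ℕ) (prefA : Fin na → Fin np → ℕ)
    (t : ℕ) (p : Fin np) (a : Fin na) : Prop :=
  (proposesTo (daIter prefP q prefA t) p a ∧
    p ∉ (daIter prefP q prefA (t + 1)).matched a) ∨
  (p ∈ (daIter prefP q prefA t).matched a ∧
    p ∉ (daIter prefP q prefA (t + 1)).matched a)

/-- `ν` is a many-to-one matching. -/
def IsMatchingQ {np na : ℕ} (prefP : Fin np → List (Fin na)) (q : Fin na → ℕ)
    (ν : Fin na → Finset (Fin np)) : Prop :=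
  (∀ a, (ν a).card ≤ q a) ∧
  (∀ p a a', p ∈ ν a → p ∈ ν a' → a = a') ∧
  (∀ a p, p ∈ ν a → a ∈ prefP p)

/-- Stability: absence of blocking pairs. -/
def IsStable {np na : ℕ} (prefP : Fin np → List (Fin na)) (q : Fin na → ℕ)
    (prefA : Fin na → Fin np → ℕ) (ν : Fin na → Finset (Fin np)) : Prop :=
  IsMatchingQ prefP q ν ∧
  ¬ ∃ (p : Fin np) (a : Fin na),
      a ∈ prefP p ∧ p ∉ ν a ∧
      (∀ a', p ∈ ν a' → (prefP p).idxOf a < (prefP p).idxOf a') ∧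
      ((ν a).card < q a ∨ ∃ p' ∈ ν a, prefA a p < prefA a p')

section Aux

variable {np na : ℕ} (prefP : Fin np → List (Fin na)) (q : Fin na → ℕ)
  (prefA : Fin na → Fin np → ℕ)

lemma suffix_not_mem_of_indexOf_lt {α : Type*} [DecidableEq α] {l t : List α}
    (hnd : l.Nodup) (hsuf : t <:+ l) {a b : α} (ha : a ∈ l) (hat : a ∉ t)
    (hb : b ∈ l) (hlt : l.idxOf b < l.idxOf a) : b ∉ t := by
  obtain ⟨pre, rfl⟩ := hsuf
  intro hbt
  have hapre : a ∈ pre := by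
    rcases List.mem_append.1 ha with h | h
    · exact h
    · exact absurd h hat
  have hbpre : b ∉ pre := fun hb' => (List.nodup_append.1 hnd).2.2 b hb' b hbt rfl
  rw [List.idxOf_append_of_notMem hbpre, List.idxOf_append_of_mem hapre] at hlt
  have := List.idxOf_lt_length_iff.2 hapre
  omega

lemma nextProposer_free {s : DAState np na} {p : Fin np}
    (h : nextProposer s = some p) : ∀ a, p ∉ s.matched a := by
  have h2 := List.find?_some h
  simp only [Bool.and_eq_true, isFreeP, List.all_eq_true, decide_eq_true_eq] at h2
  exact fun a => h2.2 a (List.mem_finRange a)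

lemma daStep_eq (s : DAState np na) :
    (daStep q prefA s = s ∧ ∀ p0, nextProposer s = some p0 → s.pending p0 = []) ∨
    ∃ p0 a0 rest T,
      nextProposer s = some p0 ∧ s.pending p0 = a0 :: rest ∧
      daStep q prefA s = ⟨Function.update s.pending p0 rest,
        Function.update s.matched a0 T⟩ ∧
      ((T = insert p0 (s.matched a0) ∧ T.card ≤ q a0) ∨
       (¬ (insert p0 (s.matched a0)).card ≤ q a0 ∧
        ∃ worst, (insert p0 (s.matched a0)).toList.argmax (prefA a0) = some worst ∧
          T = (insert p0 (s.matched a0)).erase worst)) := by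
  cases hnp : nextProposer s with
  | none =>
    refine Or.inl ⟨by simp [daStep, hnp], fun p1 h => ?_⟩
    cases h
  | some p0 =>
    cases hpl : s.pending p0 with
    | nil =>
      refine Or.inl ⟨by simp [daStep, hnp, hpl], fun p1 h => ?_⟩
      cases h; exact hpl
    | cons a0 rest =>
      by_cases hc : (insert p0 (s.matched a0)).card ≤ q a0
      · exact Or.inr ⟨p0, a0, rest, insert p0 (s.matched a0), rfl, hpl,
          by simp [daStep, hnp, hpl, hc], Or.inl ⟨rfl, hc⟩⟩
      · have hne : (insert p0 (s.matched a0)).toList ≠ [] := by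
          simp only [ne_eq, Finset.toList_eq_nil]
          exact Finset.insert_ne_empty _ _
        cases hw : (insert p0 (s.matched a0)).toList.argmax (prefA a0) with
        | none => exact absurd (List.argmax_eq_none.1 hw) hne
        | some worst =>
          exact Or.inr ⟨p0, a0, rest, (insert p0 (s.matched a0)).erase worst,
            rfl, hpl, by simp [daStep, hnp, hpl, hc, hw], Or.inr ⟨hc, worst, hw, rfl⟩⟩

/-- Invariants of the deferred acceptance run. -/
structure DAInv (s : DAState np na) : Prop where
  suffix : ∀ p, s.pending p <:+ prefP p
  card_le : ∀ a, (s.matched a).card ≤ q a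
  uniq : ∀ p a a', p ∈ s.matched a → p ∈ s.matched a' → a = a'
  consumed : ∀ p a, p ∈ s.matched a → a ∈ prefP p ∧ a ∉ s.pending p

variable {prefP q prefA}

lemma inv_update (hP : ∀ p, (prefP p).Nodup) {s : DAState np na}
    (hinv : DAInv prefP q s)
    {p0 : Fin np} {a0 : Fin na} {rest : List (Fin na)}
    (hpl : s.pending p0 = a0 :: rest) (hfree : ∀ a, p0 ∉ s.matched a)
    {T : Finset (Fin np)} (hT : T ⊆ insert p0 (s.matched a0)) (hTc : T.card ≤ q a0) :
    DAInv prefP q (⟨Function.update s.pending p0 rest,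
      Function.update s.matched a0 T⟩ : DAState np na) := by
  have hsuf0 : (a0 :: rest) <:+ prefP p0 := hpl ▸ hinv.suffix p0
  have ha0mem : a0 ∈ prefP p0 := hsuf0.subset List.mem_cons_self
  have hnd : (a0 :: rest).Nodup := (hP p0).sublist hsuf0.sublist
  constructor
  · intro p
    by_cases hp : p = p0
    · subst hp
      simp only [Function.update_self]
      exact (List.suffix_cons a0 rest).trans hsuf0
    · simpa [Function.update_of_ne hp] using hinv.suffix p
  · intro a
    by_cases ha : a = a0
    · subst ha; simpa using hTc
    · simpa [Function.update_of_ne ha] using hinv.card_le a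
  · intro p a a' hma hma'
    by_cases ha : a = a0 <;> by_cases ha' : a' = a0
    · rw [ha, ha']
    · subst ha
      simp only [Function.update_self] at hma
      simp only [Function.update_of_ne ha'] at hma'
      rcases Finset.mem_insert.1 (hT hma) with rfl | h
      · exact absurd hma' (hfree a')
      · exact hinv.uniq p a a' h hma'
    · subst ha'
      simp only [Function.update_self] at hma'
      simp only [Function.update_of_ne ha] at hma
      rcases Finset.mem_insert.1 (hT hma') with rfl | h
      · exact absurd hma (hfree a)
      · exact hinv.uniq p a a' hma h
    · simp only [Function.update_of_ne ha] at hma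
      simp only [Function.update_of_ne ha'] at hma'
      exact hinv.uniq p a a' hma hma'
  · intro p a hma
    by_cases ha : a = a0
    · subst ha
      simp only [Function.update_self] at hma
      rcases Finset.mem_insert.1 (hT hma) with rfl | h
      · refine ⟨ha0mem, ?_⟩
        simp only [Function.update_self]
        exact (List.nodup_cons.1 hnd).1
      · have hp : p ≠ p0 := fun he => hfree a (he ▸ h)
        have := hinv.consumed p a h
        simpa [Function.update_of_ne hp] using this
    · simp only [Function.update_of_ne ha] at hma
      have hp : p ≠ p0 := fun he => hfree a (he ▸ hma)
      have := hinv.consumed p a hma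
      simpa [Function.update_of_ne hp] using this

lemma inv_step (hP : ∀ p, (prefP p).Nodup) {s : DAState np na}
    (hinv : DAInv prefP q s) : DAInv prefP q (daStep q prefA s) := by
  rcases daStep_eq q prefA s with ⟨heq, -⟩ |
    ⟨p0, a0, rest, T, hnp, hpl, heq, hbr⟩
  · rwa [heq]
  · rw [heq]
    have hfree := nextProposer_free hnp
    have hScard : (insert p0 (s.matched a0)).card ≤ q a0 + 1 := by
      rw [Finset.card_insert_of_notMem (hfree a0)]
      exact Nat.add_le_add_right (hinv.card_le a0) 1
    rcases hbr with ⟨rfl, hc⟩ | ⟨hc, worst, hw, rfl⟩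
    · exact inv_update hP hinv hpl hfree (Finset.Subset.refl _) hc
    · have hwmem : worst ∈ insert p0 (s.matched a0) :=
        Finset.mem_toList.1 (List.argmax_mem hw)
      refine inv_update hP hinv hpl hfree (Finset.erase_subset _ _) ?_
      rw [Finset.card_erase_of_mem hwmem]
      omega

lemma daIter_succ (t : ℕ) :
    daIter prefP q prefA (t + 1) = daStep q prefA (daIter prefP q prefA t) := by
  simp [daIter, Function.iterate_succ_apply']

lemma inv_iter (hP : ∀ p, (prefP p).Nodup) (t : ℕ) :
    DAInv prefP q (daIter prefP q prefA t) := by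
  induction t with
  | zero =>
    constructor <;> intros <;> simp_all [daIter]
  | succ t ih =>
    rw [daIter_succ]
    exact inv_step hP ih

/-- Every preference-list entry of `p` that has been consumed without `p` being
currently held corresponds to an earlier rejection. -/
lemma hist (t : ℕ) :
    ∀ p a, a ∈ prefP p → a ∉ (daIter prefP q prefA t).pending p →
      p ∉ (daIter prefP q prefA t).matched a →
      ∃ u < t, RejectedAt prefP q prefA u p a := by
  induction t with
  | zero =>
    intro p a hmem hpend _
    exact absurd hmem (by simpa [daIter] using hpend)
  | succ t ih =>
    intro p a hmem hpend hmat
    rw [daIter_succ] at hpend hmat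
    rcases daStep_eq q prefA (daIter prefP q prefA t) with ⟨heq, -⟩ |
      ⟨p0, a0, rest, T, hnp, hpl, heq, hbr⟩
    · rw [heq] at hpend hmat
      obtain ⟨u, hu, hr⟩ := ih p a hmem hpend hmat
      exact ⟨u, Nat.lt_succ_of_lt hu, hr⟩
    · rw [heq] at hpend hmat
      simp only at hpend hmat
      by_cases hp : p = p0
      · subst hp
        simp only [Function.update_self] at hpend
        by_cases ha : a = a0
        · subst ha
          refine ⟨t, Nat.lt_succ_self t, Or.inl ⟨⟨hnp, ?_⟩, ?_⟩⟩
          · rw [hpl]; rfl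
          · rw [daIter_succ, heq]; exact hmat
        · have hpend' : a ∉ (daIter prefP q prefA t).pending p := by
            rw [hpl]
            simp only [List.mem_cons, not_or]
            exact ⟨ha, hpend⟩
          simp only [Function.update_of_ne ha] at hmat
          obtain ⟨u, hu, hr⟩ := ih p a hmem hpend' hmat
          exact ⟨u, Nat.lt_succ_of_lt hu, hr⟩
      · simp only [Function.update_of_ne hp] at hpend
        by_cases ha : a = a0
        · subst ha
          by_cases hm : p ∈ (daIter prefP q prefA t).matched a
          · refine ⟨t, Nat.lt_succ_self t, Or.inr ⟨hm, ?_⟩⟩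
            rw [daIter_succ, heq]; exact hmat
          · obtain ⟨u, hu, hr⟩ := ih p a hmem hpend hm
            exact ⟨u, Nat.lt_succ_of_lt hu, hr⟩
        · simp only [Function.update_of_ne ha] at hmat
          obtain ⟨u, hu, hr⟩ := ih p a hmem hpend hmat
          exact ⟨u, Nat.lt_succ_of_lt hu, hr⟩

/-- Analysis of a rejection step. -/
lemma rejected_step (hP : ∀ p, (prefP p).Nodup)
    (hA : ∀ a, Function.Injective (prefA a))
    {t : ℕ} {p : Fin np} {a : Fin na}
    (hrej : RejectedAt prefP q prefA t p a) :
    p ∉ (daIter prefP q prefA (t + 1)).matched a ∧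
    ((daIter prefP q prefA (t + 1)).matched a).card = q a ∧
    (∀ p' ∈ (daIter prefP q prefA (t + 1)).matched a, prefA a p' < prefA a p) ∧
    (∀ a', a' ≠ a → (daIter prefP q prefA (t + 1)).matched a' =
      (daIter prefP q prefA t).matched a') ∧
    (∀ p', (daIter prefP q prefA (t + 1)).pending p' =
        (daIter prefP q prefA t).pending p' ∨
      (daIter prefP q prefA t).pending p' =
        a :: (daIter prefP q prefA (t + 1)).pending p') := by
  have hinv : DAInv prefP q (daIter prefP q prefA t) := inv_iter hP t
  set s := daIter prefP q prefA t with hs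
  have hsucc : daIter prefP q prefA (t + 1) = daStep q prefA s := daIter_succ t
  rcases daStep_eq q prefA s with ⟨heq, hemp⟩ |
    ⟨p0, a0, rest, T, hnp, hpl, heq, hbr⟩
  · exfalso
    rcases hrej with ⟨⟨hnp, hhead⟩, hnm⟩ | ⟨hm, hnm⟩
    · rw [hemp p hnp] at hhead; cases hhead
    · rw [hsucc, heq] at hnm; exact hnm hm
  · have hfree := nextProposer_free hnp
    -- show a0 = a and identify T
    have ha0 : a0 = a ∧ p ∈ insert p0 (s.matched a0) := by
      rcases hrej with ⟨⟨hnp', hhead⟩, hnm⟩ | ⟨hm, hnm⟩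
      · rw [hnp] at hnp'
        have hp0 : p0 = p := by cases hnp'; rfl
        subst hp0
        rw [hpl] at hhead
        have : a0 = a := by cases hhead; rfl
        exact ⟨this, Finset.mem_insert_self _ _⟩
      · rw [hsucc, heq] at hnm
        simp only at hnm
        by_cases ha : a = a0
        · exact ⟨ha.symm, ha ▸ Finset.mem_insert_of_mem hm⟩
        · simp only [Function.update_of_ne ha] at hnm
          exact absurd hm hnm
    obtain ⟨rfl, hpS⟩ := ha0
    have hnm : p ∉ (daIter prefP q prefA (t + 1)).matched a0 := by
      rcases hrej with ⟨-, hnm⟩ | ⟨-, hnm⟩ <;> exact hnm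
    rw [hsucc, heq] at hnm ⊢
    simp only [Function.update_self] at hnm ⊢
    -- T must be the erase branch with worst = p
    have hbr' : ¬ (insert p0 (s.matched a0)).card ≤ q a0 ∧
        (insert p0 (s.matched a0)).toList.argmax (prefA a0) = some p ∧
        T = (insert p0 (s.matched a0)).erase p := by
      rcases hbr with ⟨rfl, hc⟩ | ⟨hc, worst, hw, rfl⟩
      · exact absurd hpS hnm
      · have hwp : worst = p := by
          by_contra hne
          exact hnm (Finset.mem_erase.2 ⟨fun h => hne h.symm, hpS⟩)
        subst hwp
        exact ⟨hc, hw, rfl⟩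
    obtain ⟨hc, hw, rfl⟩ := hbr'
    have hScard : (insert p0 (s.matched a0)).card = q a0 + 1 := by
      have h4 : (insert p0 (s.matched a0)).card = (s.matched a0).card + 1 :=
        Finset.card_insert_of_notMem (hfree a0)
      have := hinv.card_le a0
      omega
    refine ⟨hnm, ?_, ?_, ?_, ?_⟩
    · rw [Finset.card_erase_of_mem hpS, hScard]
      omega
    · intro p' hp'
      have hp'S := Finset.mem_erase.1 hp'
      have hle : prefA a0 p' ≤ prefA a0 p :=
        List.le_of_mem_argmax (Finset.mem_toList.2 hp'S.2) hw
      exact lt_of_le_of_ne hle (fun h => hp'S.1 (hA a0 h))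
    · intro a' ha'
      simp only [Function.update_of_ne ha']
    · intro p'
      by_cases hp' : p' = p0
      · subst hp'
        right
        simp only [Function.update_self, hpl]
      · left
        simp only [Function.update_of_ne hp']

lemma main_aux (hP : ∀ p, (prefP p).Nodup)
    (hA : ∀ a, Function.Injective (prefA a)) (hq : ∀ a, 0 < q a) :
    ∀ t (p : Fin np) (a : Fin na), RejectedAt prefP q prefA t p a →
      ∀ ν : Fin na → Finset (Fin np), IsStable prefP q prefA ν → p ∉ ν a := by
  intro t
  induction t using Nat.strong_induction_on with
  | _ t ih =>
    intro p a hrej ν hst hpν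
    obtain ⟨⟨hνcard, hνuniq, hνmem⟩, hblock⟩ := hst
    obtain ⟨hpM, hMcard, hMpref, hmat_eq, hpend_eq⟩ := rejected_step hP hA hrej
    have hinv' : DAInv prefP q (daIter prefP q prefA (t + 1)) := inv_iter hP (t + 1)
    set M := (daIter prefP q prefA (t + 1)).matched a with hM
    -- find p' ∈ M with p' ∉ ν a
    have hnsub : ¬ M ⊆ (ν a).erase p := by
      intro hsub
      have h1 := Finset.card_le_card hsub
      rw [Finset.card_erase_of_mem hpν] at h1
      have h2 := hνcard a
      have h3 := hq a
      omega
    obtain ⟨p', hp'M, hp'e⟩ := Finset.not_subset.1 hnsub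
    have hp'ne : p' ≠ p := fun h => hpM (h ▸ hp'M)
    have hp'νa : p' ∉ ν a := fun h => hp'e (Finset.mem_erase.2 ⟨hp'ne, h⟩)
    obtain ⟨haP, hapend'⟩ := hinv'.consumed p' a hp'M
    -- (p', a) is a blocking pair for ν
    refine hblock ⟨p', a, haP, hp'νa, ?_, Or.inr ⟨p, hpν, hMpref p' hp'M⟩⟩
    intro a'' hm
    have ha''P : a'' ∈ prefP p' := hνmem a'' p' hm
    have ha''ne : a'' ≠ a := fun h => hp'νa (h ▸ hm)
    by_contra hnot
    push_neg at hnot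
    have hlt : (prefP p').idxOf a'' < (prefP p').idxOf a := by
      rcases lt_or_eq_of_le hnot with h | h
      · exact h
      · exact absurd ((List.idxOf_inj ha''P).1 h) ha''ne
    -- a'' was consumed by p' before step t and p' is not held by a''
    have hpend'' : a'' ∉ (daIter prefP q prefA (t + 1)).pending p' :=
      suffix_not_mem_of_indexOf_lt (hP p') (hinv'.suffix p') haP hapend' ha''P hlt
    have hpendt : a'' ∉ (daIter prefP q prefA t).pending p' := by
      rcases hpend_eq p' with h | h
      · rwa [← h]
      · rw [h]
        simp only [List.mem_cons, not_or]
        exact ⟨ha''ne, hpend''⟩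
    have hmatt : p' ∉ (daIter prefP q prefA t).matched a'' := by
      rw [← hmat_eq a'' ha''ne]
      intro h
      exact ha''ne (hinv'.uniq p' a'' a h hp'M)
    obtain ⟨u, hu, hr⟩ := hist t p' a'' ha''P hpendt hmatt
    exact ih u hu p' a'' hr ν ⟨⟨hνcard, hνuniq, hνmem⟩, hblock⟩ hm

end Aux

/-- if, during the run of proposer-proposing deferred acceptance, a
proposer `p` is rejected by an acceptor `a` at some step, then `a` is impossible for
`p`: no stable matching pairs `p` with `a`. -/
theorem rejected_implies_impossible (np na : ℕ)
    (prefP : Fin np → List (Fin na)) (q : Fin na → ℕ) (prefA : Fin na → Fin np → ℕ)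
    (hP : ∀ p, (prefP p).Nodup) (hA : ∀ a, Function.Injective (prefA a))
    (hq : ∀ a, 0 < q a)
    (t : ℕ) (p : Fin np) (a : Fin na)
    (hrej : RejectedAt prefP q prefA t p a) :
    ∀ ν : Fin na → Finset (Fin np), IsStable prefP q prefA ν → p ∉ ν a :=
  main_aux hP hA hq t p a hrej
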